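/- Let R be an alternative Banach algebra with unit in which left inverses can be cancelled (A⁻¹(AB) = B whenever A has a left inverse A⁻¹). If A ∈ R has a left inverse Q and B ∈ R satisfies ‖B‖·‖Q‖ < 1, then A + B has a left inverse, given by C = Q(I − BQ + (BQ)² − (BQ)³ + ...). -/

import Mathlib

set_option linter.unusedSectionVars false


/-- Powers in a (possibly non-associative) algebra: `apow A 0 = 1`, `apow A (n+1) = A * apow A n`. -/
def apow {R : Type*} [One R] [Mul R] (A : R) : ℕ → R
  | 0 => 1
  | n + 1 => A * apow A n

section Aux

variable {R : Type*} [AddCommGroup R] [Mul R]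

/-- The associator. -/
def asso (a b c : R) : R := a * b * c - a * (b * c)

private lemma helper_sub {G : Type*} [AddCommGroup G] {a b c d : G}
    (h : a = b) (h2 : c - d = a - b) : c = d := by
  rw [h, sub_self] at h2
  exact sub_eq_zero.mp h2

variable (hld : ∀ a b c : R, a * (b + c) = a * b + a * c)
  (hrd : ∀ a b c : R, (a + b) * c = a * c + b * c)
  (halt : ∀ a b : R, (a * a) * b = a * (a * b) ∧ b * (a * a) = (b * a) * a)

include hld hrd halt

private lemma mz (a : R) : a * (0 : R) = 0 := by
  have h := hld a 0 0
  rw [add_zero] at h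
  exact (left_eq_add.mp h)

private lemma zm (a : R) : (0 : R) * a = 0 := by
  have h := hrd 0 0 a
  rw [add_zero] at h
  exact (left_eq_add.mp h)

private lemma msub (a b c : R) : a * (b - c) = a * b - a * c := by
  have h : a * (b - c) + a * c = a * (b - c + c) := (hld a (b - c) c).symm
  rw [sub_add_cancel] at h
  exact eq_sub_of_add_eq h

private lemma ssub (a b c : R) : (a - b) * c = a * c - b * c := by
  have h : (a - b) * c + b * c = (a - b + b) * c := (hrd (a - b) b c).symm
  rw [sub_add_cancel] at h
  exact eq_sub_of_add_eq h

private lemma mneg (a b : R) : a * (-b) = -(a * b) := by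
  have h := msub hld hrd halt a 0 b
  rw [zero_sub, mz hld hrd halt, zero_sub] at h
  exact h

private lemma asso_add1 (a a' b c : R) :
    asso (a + a') b c = asso a b c + asso a' b c := by
  simp only [asso, hrd]; abel

private lemma asso_add2 (a b b' c : R) :
    asso a (b + b') c = asso a b c + asso a b' c := by
  simp only [asso, hld, hrd]; abel

private lemma asso_add3 (a b c c' : R) :
    asso a b (c + c') = asso a b c + asso a b c' := by
  simp only [asso, hld]; abel

private lemma asso_aa (a c : R) : asso a a c = 0 := by
  simp only [asso]
  exact sub_eq_zero.mpr (halt a c).1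

private lemma asso_bb (a b : R) : asso a b b = 0 := by
  simp only [asso]
  exact sub_eq_zero.mpr ((halt b a).2).symm

private lemma asso_swap12 (a b c : R) : asso b a c = -asso a b c := by
  have h : asso (a + b) (a + b) c = 0 := asso_aa hld hrd halt _ _
  rw [asso_add1 hld hrd halt, asso_add2 hld hrd halt, asso_add2 hld hrd halt,
    asso_aa hld hrd halt, asso_aa hld hrd halt] at h
  simp only [zero_add, add_zero] at h
  exact eq_neg_of_add_eq_zero_right h

private lemma asso_swap23 (a b c : R) : asso a c b = -asso a b c := by
  have h : asso a (b + c) (b + c) = 0 := asso_bb hld hrd halt _ _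
  rw [asso_add2 hld hrd halt, asso_add3 hld hrd halt, asso_add3 hld hrd halt,
    asso_bb hld hrd halt, asso_bb hld hrd halt] at h
  simp only [zero_add, add_zero] at h
  exact eq_neg_of_add_eq_zero_right h

private lemma asso_cyc (a b c : R) : asso c a b = asso a b c := by
  rw [show asso c a b = -asso a c b from asso_swap12 hld hrd halt a c b,
    asso_swap23 hld hrd halt a b c, neg_neg]

private lemma asso_flex (a b : R) : asso a b a = 0 := by
  rw [asso_swap23 hld hrd halt a a b, asso_aa hld hrd halt, neg_zero]

private lemma asso_swap13 (a b c : R) : asso c b a = -asso a b c := by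
  rw [show asso c b a = asso b a c from asso_cyc hld hrd halt b a c,
    asso_swap12 hld hrd halt a b c]

private lemma teich (w x y z : R) :
    asso (w * x) y z - asso w (x * y) z + asso w x (y * z)
      = w * asso x y z + asso w x y * z := by
  simp only [asso, msub hld hrd halt, ssub hld hrd halt]
  abel

private lemma lemA1 (x y z : R) :
    asso x (x * y) z = asso (x * x) y z - x * asso x y z := by
  have h := teich hld hrd halt x x y z
  rw [asso_aa hld hrd halt, asso_aa hld hrd halt, zm hld hrd halt, add_zero, add_zero] at h
  exact helper_sub h.symm (by abel)

private lemma lemA2 (x y z : R) :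
    asso (x * y) x z = x * asso x y z - asso (x * x) y z := by
  rw [show asso (x * y) x z = -asso x (x * y) z from
    asso_swap12 hld hrd halt x (x * y) z, lemA1 hld hrd halt]
  abel

private lemma lem_xy_z_x (x y z : R) :
    asso (x * y) z x = asso (x * x) y z - x * asso x y z := by
  rw [show asso (x * y) z x = -asso (x * y) x z from
    asso_swap23 hld hrd halt (x * y) x z, lemA2 hld hrd halt]
  abel

private lemma leftM (x y z : R) : x * y * x * z = x * (y * (x * z)) := by
  have h : asso (x * y) x z + asso x y (x * z) = 0 := by
    have e1 : asso x y (x * z) = asso (x * z) x y :=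
      (asso_cyc hld hrd halt x y (x * z)).symm
    rw [e1, lemA2 hld hrd halt x z y, lemA2 hld hrd halt x y z,
      asso_swap23 hld hrd halt x y z, asso_swap23 hld hrd halt (x * x) y z,
      mneg hld hrd halt]
    abel
  simp only [asso] at h
  exact helper_sub h (by abel)

private lemma lem_y_zx_x (x y z : R) :
    asso y (z * x) x = x * asso x y z := by
  have e1 : asso y (z * x) x = asso (z * x) x y := by
    rw [asso_swap23 hld hrd halt y x (z * x),
      show asso y x (z * x) = asso (z * x) y x from
        (asso_cyc hld hrd halt y x (z * x)).symm,
      asso_swap23 hld hrd halt (z * x) x y, neg_neg]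
  have e2 := teich hld hrd halt z x x y
  rw [asso_aa hld hrd halt, mz hld hrd halt, asso_bb hld hrd halt, zm hld hrd halt, add_zero] at e2
  have e3 : asso z x (x * y) = asso (x * x) y z - x * asso x y z := by
    rw [show asso z x (x * y) = asso (x * y) z x from
      (asso_cyc hld hrd halt z x (x * y)).symm, lem_xy_z_x hld hrd halt]
  have e4 : asso z (x * x) y = asso (x * x) y z :=
    asso_cyc hld hrd halt (x * x) y z
  rw [e3, e4] at e2
  rw [e1]
  exact helper_sub e2 (by abel)

private lemma lemM1 (x y z : R) :
    asso (x * x) y z = x * asso x y z + asso x y z * x := by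
  have e := teich hld hrd halt y z x x
  rw [asso_bb hld hrd halt, asso_bb hld hrd halt, mz hld hrd halt, lem_y_zx_x hld hrd halt,
    zero_add] at e
  rw [show asso y z x = asso x y z from by
      rw [asso_cyc hld hrd halt z x y, asso_cyc hld hrd halt x y z]] at e
  rw [show asso y z (x * x) = asso (x * x) y z from by
      rw [asso_cyc hld hrd halt z (x * x) y,
        asso_cyc hld hrd halt (x * x) y z]] at e
  exact helper_sub e (by abel)

private lemma midM (x y z : R) : (x * y) * (z * x) = x * ((y * z) * x) := by
  have hflex : x * (y * z) * x = x * ((y * z) * x) := by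
    have h0 := asso_flex hld hrd halt x (y * z)
    simp only [asso] at h0
    exact sub_eq_zero.mp h0
  have h1 : asso (x * y) z x = asso x y z * x := by
    rw [lem_xy_z_x hld hrd halt, lemM1 hld hrd halt]
    abel
  simp only [asso, ssub hld hrd halt] at h1
  have goal1 : (x * y) * (z * x) = x * (y * z) * x :=
    helper_sub h1.symm (by abel)
  rw [goal1, hflex]

section Pow

variable [One R] (hone : ∀ a : R, 1 * a = a ∧ a * 1 = a)

include hone

private lemma apow_one_eq (x : R) : apow x 1 = x := by
  show x * apow x 0 = x
  show x * 1 = x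
  exact (hone x).2

private lemma apow_succ_right (x : R) (n : ℕ) :
    apow x (n + 1) = apow x n * x := by
  induction n with
  | zero =>
    rw [apow_one_eq hld hrd halt hone]
    show x = 1 * x
    exact ((hone x).1).symm
  | succ n ih =>
    have flx : x * (apow x n * x) = (x * apow x n) * x := by
      have h0 := asso_flex hld hrd halt x (apow x n)
      simp only [asso] at h0
      exact (sub_eq_zero.mp h0).symm
    calc apow x (n + 2) = x * apow x (n + 1) := rfl
      _ = x * (apow x n * x) := by rw [ih]
      _ = (x * apow x n) * x := flx
      _ = apow x (n + 1) * x := rfl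

private lemma apow_mul_assoc (x : R) (n : ℕ) :
    ∀ z : R, apow x (n + 1) * z = x * (apow x n * z) := by
  have mp : ∀ (m : ℕ) (z : R), apow x (m + 2) * z = x * (apow x m * (x * z)) := by
    intro m z
    have e : apow x (m + 2) = (x * apow x m) * x := by
      rw [apow_succ_right hld hrd halt hone x (m + 1)]
      rfl
    rw [e]
    exact leftM hld hrd halt x (apow x m) z
  induction n using Nat.twoStepInduction with
  | zero =>
    intro z
    show (x * 1) * z = x * (1 * z)
    rw [(hone x).2, (hone z).1]
  | one =>
    intro z
    show (x * (x * 1)) * z = x * ((x * 1) * z)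
    rw [(hone x).2, (halt x z).1]
  | more n ih _ =>
    intro z
    rw [mp (n + 1) z, ih (x * z), mp n z]

private lemma asso_pow (x : R) (n : ℕ) (z : R) : asso x (apow x n) z = 0 := by
  simp only [asso]
  rw [sub_eq_zero]
  exact apow_mul_assoc hld hrd halt hone x n z

end Pow

end Aux

/-- In an alternative Banach algebra with unit in which left inverses cancel,
if `Q` is a left inverse of `A` and `‖B‖ * ‖Q‖ < 1`, then `A + B` has a left inverse,
given by the absolutely convergent series `C = Q(1 - BQ + (BQ)² - (BQ)³ + ⋯)`. -/
theorem left_inverse_perturbation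
    {R : Type*} [NormedAddCommGroup R] [NormedSpace ℝ R] [CompleteSpace R]
    [One R] [Mul R]
    (hone : ∀ a : R, 1 * a = a ∧ a * 1 = a)
    (hnorm_one : ‖(1 : R)‖ = 1)
    (hsubmul : ∀ a b : R, ‖a * b‖ ≤ ‖a‖ * ‖b‖)
    (hldistrib : ∀ a b c : R, a * (b + c) = a * b + a * c)
    (hrdistrib : ∀ a b c : R, (a + b) * c = a * c + b * c)
    (hsmul_left : ∀ (r : ℝ) (a b : R), (r • a) * b = r • (a * b))
    (hsmul_right : ∀ (r : ℝ) (a b : R), a * (r • b) = r • (a * b))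
    (halt : ∀ a b : R, (a * a) * b = a * (a * b) ∧ b * (a * a) = (b * a) * a)
    (hcancel : ∀ a q b : R, q * a = 1 → q * (a * b) = b)
    (A Q B : R) (hQ : Q * A = 1) (hB : ‖B‖ * ‖Q‖ < 1) :
    ∃ C : R,
      HasSum (fun n : ℕ => ((-1 : ℝ) ^ n) • (Q * apow (B * Q) n)) C ∧
      C * (A + B) = 1 := by
  have h1l : ∀ a : R, 1 * a = a := fun a => (hone a).1
  have h1r : ∀ a : R, a * 1 = a := fun a => (hone a).2
  -- linearized right alternative law
  have rarl : ∀ z u v : R, z * (u * v) + z * (v * u) = (z * u) * v + (z * v) * u := by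
    intro z u v
    have h := (halt (u + v) z).2
    simp only [hldistrib, hrdistrib] at h
    rw [(halt u z).2, (halt v z).2] at h
    exact helper_sub h (by abel)
  have L1 : ∀ u : R, (Q * u) * A = Q * (u * A) := by
    intro u
    have h := rarl Q u A
    rw [hcancel A Q u hQ, hQ, h1l u] at h
    exact (add_right_cancel h).symm
  have xA : (B * Q) * A = B := by
    have h0 : asso Q A B = 0 := by
      simp only [asso]
      rw [hQ, hcancel A Q B hQ, h1l B, sub_self]
    have h1 : asso B Q A = 0 := by
      rw [asso_cyc hldistrib hrdistrib halt Q A B]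
      exact h0
    simp only [asso] at h1
    have h2 := sub_eq_zero.mp h1
    rw [hQ, h1r B] at h2
    exact h2
  have S : ∀ n, apow (B * Q) (n + 1) * A = apow (B * Q) n * B := by
    intro n
    induction n with
    | zero =>
      rw [apow_one_eq hldistrib hrdistrib halt hone (B * Q), xA]
      show B = 1 * B
      exact (h1l B).symm
    | succ n ih =>
      rw [apow_mul_assoc hldistrib hrdistrib halt hone (B * Q) (n + 1) A, ih,
        apow_mul_assoc hldistrib hrdistrib halt hone (B * Q) n B]
  have RR : ∀ n, asso B Q (apow (B * Q) n) = 0 := by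
    intro n
    induction n using Nat.twoStepInduction with
    | zero =>
      show asso B Q 1 = 0
      simp only [asso]
      rw [h1r (B * Q), h1r Q, sub_self]
    | one =>
      rw [apow_one_eq hldistrib hrdistrib halt hone (B * Q)]
      rw [asso_swap23 hldistrib hrdistrib halt B (B * Q) Q]
      have e2 : asso B (B * Q) Q = 0 := by
        simp only [asso]
        rw [← (halt B Q).1, ← (halt Q B).2, ← (halt Q (B * B)).2,
          ← (halt B (Q * Q)).1, sub_self]
      rw [e2, neg_zero]
    | more n ihn ihn1 =>
      have pdef : apow (B * Q) (n + 2) = apow (B * Q) (n + 1) * (B * Q) :=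
        apow_succ_right hldistrib hrdistrib halt hone (B * Q) (n + 1)
      have ht := teich hldistrib hrdistrib halt B Q (apow (B * Q) (n + 1)) (B * Q)
      rw [asso_flex hldistrib hrdistrib halt (B * Q) (apow (B * Q) (n + 1))] at ht
      have hQpx : asso Q (apow (B * Q) (n + 1)) (B * Q) = 0 := by
        rw [asso_swap13 hldistrib hrdistrib halt (B * Q) (apow (B * Q) (n + 1)) Q,
          asso_pow hldistrib hrdistrib halt hone (B * Q) (n + 1) Q, neg_zero]
      rw [hQpx, mz hldistrib hrdistrib halt, ihn1, zm hldistrib hrdistrib halt, ← pdef] at ht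
      have hQp : Q * apow (B * Q) (n + 1) = (Q * apow (B * Q) n) * (B * Q) := by
        have h3 : asso Q (apow (B * Q) n) (B * Q) = 0 := by
          rw [asso_swap13 hldistrib hrdistrib halt (B * Q) (apow (B * Q) n) Q,
            asso_pow hldistrib hrdistrib halt hone (B * Q) n Q, neg_zero]
        simp only [asso] at h3
        have h4 := (sub_eq_zero.mp h3).symm
        rw [← apow_succ_right hldistrib hrdistrib halt hone (B * Q) n] at h4
        exact h4
      have hBQp : B * (Q * apow (B * Q) n) = apow (B * Q) (n + 1) := by
        have h5 := ihn
        simp only [asso] at h5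
        exact ((sub_eq_zero.mp h5).symm).trans rfl
      have hBQp1 : B * (Q * apow (B * Q) (n + 1)) = apow (B * Q) (n + 2) := by
        have h5 := ihn1
        simp only [asso] at h5
        exact ((sub_eq_zero.mp h5).symm).trans rfl
      have key : asso B (Q * apow (B * Q) (n + 1)) (B * Q) = 0 := by
        have e1 : asso B (Q * apow (B * Q) (n + 1)) (B * Q)
            = asso (B * Q) B (Q * apow (B * Q) (n + 1)) :=
          (asso_cyc hldistrib hrdistrib halt B (Q * apow (B * Q) (n + 1)) (B * Q)).symm
        rw [e1]
        simp only [asso]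
        rw [hBQp1, hQp,
          midM hldistrib hrdistrib halt (B * Q) B (Q * apow (B * Q) n),
          hBQp,
          ← apow_succ_right hldistrib hrdistrib halt hone (B * Q) (n + 1)]
        rw [show (B * Q) * apow (B * Q) (n + 2) = apow (B * Q) (n + 3) from rfl]
        exact sub_self _
      rw [key] at ht
      simpa using ht
  have T : ∀ n, (Q * apow (B * Q) (n + 1)) * A = (Q * apow (B * Q) n) * B := by
    intro n
    rw [L1 (apow (B * Q) (n + 1)), S n]
    have h3 : asso Q (apow (B * Q) n) B = 0 := by
      rw [← asso_cyc hldistrib hrdistrib halt Q (apow (B * Q) n) B]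
      exact RR n
    simp only [asso] at h3
    exact (sub_eq_zero.mp h3).symm
  -- Analysis
  set r : ℝ := ‖B‖ * ‖Q‖ with hr
  have hr0 : 0 ≤ r := mul_nonneg (norm_nonneg _) (norm_nonneg _)
  have hxr : ‖B * Q‖ ≤ r := hsubmul B Q
  have hapow : ∀ n, ‖apow (B * Q) n‖ ≤ r ^ n := by
    intro n
    induction n with
    | zero => simp [apow, hnorm_one]
    | succ n ih =>
      calc ‖apow (B * Q) (n + 1)‖ = ‖(B * Q) * apow (B * Q) n‖ := rfl
        _ ≤ ‖B * Q‖ * ‖apow (B * Q) n‖ := hsubmul _ _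
        _ ≤ r * r ^ n := mul_le_mul hxr ih (norm_nonneg _) hr0
        _ = r ^ (n + 1) := (pow_succ' r n).symm
  have hfb : ∀ n : ℕ, ‖((-1 : ℝ) ^ n) • (Q * apow (B * Q) n)‖ ≤ ‖Q‖ * r ^ n := by
    intro n
    rw [norm_smul]
    have e1 : ‖(-1 : ℝ) ^ n‖ = 1 := by simp
    rw [e1, one_mul]
    calc ‖Q * apow (B * Q) n‖ ≤ ‖Q‖ * ‖apow (B * Q) n‖ := hsubmul _ _
      _ ≤ ‖Q‖ * r ^ n := mul_le_mul_of_nonneg_left (hapow n) (norm_nonneg _)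
  have hsummable : Summable (fun n : ℕ => ((-1 : ℝ) ^ n) • (Q * apow (B * Q) n)) :=
    Summable.of_norm_bounded
      ((summable_geometric_of_lt_one hr0 hB).mul_left ‖Q‖) hfb
  obtain ⟨C, hC⟩ := hsummable
  refine ⟨C, hC, ?_⟩
  -- continuous linear map of right multiplication by A + B
  let Lmap : R →ₗ[ℝ] R :=
    { toFun := fun v => v * (A + B)
      map_add' := fun u v => hrdistrib u v (A + B)
      map_smul' := fun c v => by simpa using hsmul_left c v (A + B) }
  let Φ : R →L[ℝ] R := LinearMap.mkContinuous Lmap ‖A + B‖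
    (fun v => (hsubmul v (A + B)).trans_eq (mul_comm _ _))
  have hsum2 := hC.mapL Φ
  set hh : ℕ → R := fun n => ((-1 : ℝ) ^ n) • ((Q * apow (B * Q) n) * A) with hhdef
  have hfun : ∀ n : ℕ, Φ (((-1 : ℝ) ^ n) • (Q * apow (B * Q) n)) = hh n - hh (n + 1) := by
    intro n
    have e0 : Φ (((-1 : ℝ) ^ n) • (Q * apow (B * Q) n))
        = (((-1 : ℝ) ^ n) • (Q * apow (B * Q) n)) * (A + B) := rfl
    rw [e0, hsmul_left, hldistrib, ← T n, hhdef]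
    simp only
    rw [smul_add, pow_succ, mul_neg_one, neg_smul, sub_neg_eq_add]
  have hsum3 : HasSum (fun n : ℕ => hh n - hh (n + 1)) (Φ C) := by
    have := hsum2
    simp only [hfun] at this
    exact this
  have hps : ∀ N, ∑ i ∈ Finset.range N, (hh i - hh (i + 1)) = hh 0 - hh N :=
    fun N => Finset.sum_range_sub' hh N
  have hzero : Filter.Tendsto hh Filter.atTop (nhds 0) := by
    have hbnd : ∀ n : ℕ, ‖hh n‖ ≤ ‖Q‖ * r ^ n * ‖A‖ := by
      intro n
      rw [hhdef]
      simp only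
      rw [norm_smul]
      have e1 : ‖(-1 : ℝ) ^ n‖ = 1 := by simp
      rw [e1, one_mul]
      calc ‖(Q * apow (B * Q) n) * A‖ ≤ ‖Q * apow (B * Q) n‖ * ‖A‖ := hsubmul _ _
        _ ≤ ‖Q‖ * r ^ n * ‖A‖ := by
            apply mul_le_mul_of_nonneg_right _ (norm_nonneg A)
            calc ‖Q * apow (B * Q) n‖ ≤ ‖Q‖ * ‖apow (B * Q) n‖ := hsubmul _ _
              _ ≤ ‖Q‖ * r ^ n := mul_le_mul_of_nonneg_left (hapow n) (norm_nonneg _)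
    have hg : Filter.Tendsto (fun N : ℕ => ‖Q‖ * r ^ N * ‖A‖) Filter.atTop (nhds 0) := by
      have h1 : Filter.Tendsto (fun N : ℕ => r ^ N) Filter.atTop (nhds 0) :=
        tendsto_pow_atTop_nhds_zero_of_lt_one hr0 hB
      simpa using (h1.const_mul ‖Q‖).mul_const ‖A‖
    exact squeeze_zero_norm hbnd hg
  have hlim1 := hsum3.tendsto_sum_nat
  simp only [hps] at hlim1
  have hlim2 : Filter.Tendsto (fun N : ℕ => hh 0 - hh N) Filter.atTop (nhds (hh 0)) := by
    have h2 := Filter.Tendsto.sub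
      (tendsto_const_nhds : Filter.Tendsto (fun _ : ℕ => hh 0) Filter.atTop (nhds (hh 0))) hzero
    simpa using h2
  have hEq : Φ C = hh 0 := tendsto_nhds_unique hlim1 hlim2
  have hΦC : Φ C = C * (A + B) := rfl
  rw [← hΦC, hEq, hhdef]
  simp only [pow_zero, one_smul]
  show (Q * 1) * A = 1
  rw [h1r Q, hQ]
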